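/- Let X ∈ ℝ^{N×N} be invertible with eigendecomposition X X^T = U Λ U^T (Λ diagonal positive, U orthogonal). If 0 < μ < λ_min(Λ^{-1/2} U^T (X + X^T) U Λ^{-1/2}), then ‖I - μX‖₂ < 1. -/

import Mathlib

open Matrix

-- congruence lemma
lemma myPosDef_conj {n : Type*} [Fintype n] [DecidableEq n]
    {A : Matrix n n ℝ} (hA : A.PosDef) {B : Matrix n n ℝ} (hB : IsUnit B.det) :
    (B * A * Bᴴ).PosDef := by
  refine Matrix.PosDef.of_dotProduct_mulVec_pos (hA.posSemidef.mul_mul_conjTranspose_same B).1 fun x hx => ?_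
  have hBH : IsUnit (Bᴴ : Matrix n n ℝ) := by
    rw [isUnit_iff_isUnit_det, det_conjTranspose]
    simpa using hB
  have h1 : Bᴴ *ᵥ x ≠ 0 := by
    intro h
    exact hx (by simpa using (Matrix.mulVec_injective_iff_isUnit.mpr hBH) (h.trans (mulVec_zero _).symm))
  rw [mul_assoc]
  have := hA.dotProduct_mulVec_pos h1
  simpa only [star_mulVec, dotProduct_mulVec, vecMul_vecMul, conjTranspose_conjTranspose,
    mulVec_mulVec] using this

lemma myShift {n : Type*} [Fintype n] [DecidableEq n] {A : Matrix n n ℝ}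
    (hA : A.IsHermitian) {μ : ℝ} (hμ : ∀ i, μ < hA.eigenvalues i) :
    (A - μ • 1).PosDef := by
  have hspec := hA.spectral_theorem
  set V : Matrix n n ℝ := (hA.eigenvectorUnitary : Matrix n n ℝ) with hV
  have hVmem := hA.eigenvectorUnitary.prop
  rw [Unitary.mem_iff] at hVmem
  have h1 : V * star V = 1 := hVmem.2
  have hdet : IsUnit V.det := by
    have := congrArg det h1
    rw [det_mul, det_one] at this
    exact IsUnit.of_mul_eq_one _ this
  have key : A - μ • 1 = V * diagonal (fun i => hA.eigenvalues i - μ) * Vᴴ := by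
    have hdiag : (diagonal (fun _ => μ) : Matrix n n ℝ) = μ • 1 := by
      ext i j
      rcases eq_or_ne i j with rfl | h
      · simp
      · simp [diagonal_apply_ne _ h, Matrix.one_apply_ne h]
    have h2 : (μ • 1 : Matrix n n ℝ) = V * (diagonal (fun _ => μ)) * star V := by
      rw [hdiag, Matrix.mul_smul, Matrix.smul_mul, Matrix.mul_one, h1]
    calc A - μ • 1 = V * diagonal (RCLike.ofReal ∘ hA.eigenvalues) * star V
          - V * diagonal (fun _ => μ) * star V := by rw [← h2]; exact congrArg (· - μ • 1) hspec
      _ = V * (diagonal (RCLike.ofReal ∘ hA.eigenvalues) - diagonal (fun _ => μ)) * star V := by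
          simp only [Matrix.mul_sub, Matrix.sub_mul]
      _ = V * diagonal (fun i => hA.eigenvalues i - μ) * Vᴴ := by
          rw [diagonal_sub, star_eq_conjTranspose]
          norm_num
  rw [key]
  exact myPosDef_conj (Matrix.PosDef.diagonal fun i => sub_pos.mpr (hμ i)) hdet

lemma myPosDef_smul {n : Type*} [Fintype n] {A : Matrix n n ℝ}
    (hA : A.PosDef) {c : ℝ} (hc : 0 < c) : (c • A).PosDef := by
  refine Matrix.PosDef.of_dotProduct_mulVec_pos (by simp only [Matrix.IsHermitian, conjTranspose_smul, star_trivial, hA.1.eq]) fun x hx => ?_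
  have h := hA.dotProduct_mulVec_pos hx
  rw [Matrix.smul_mulVec, dotProduct_smul]
  exact mul_pos hc h

set_option maxHeartbeats 1000000 in
set_option synthInstance.maxHeartbeats 400000 in
/-- Let `X` be invertible with `X Xᵀ = U Λ Uᵀ`, `U` orthogonal and
`Λ = diag(d)` with positive entries. If `0 < μ < λ_min(Λ^{-1/2} Uᵀ (X + Xᵀ) U Λ^{-1/2})`
then `‖I - μX‖₂ < 1` (spectral norm). -/
theorem stmt12 {N : ℕ} (hN : 0 < N)
    (X U : Matrix (Fin N) (Fin N) ℝ) (d : Fin N → ℝ)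
    (hX : IsUnit X.det)
    (hU : U * Uᵀ = 1 ∧ Uᵀ * U = 1)
    (hd : ∀ i, 0 < d i)
    (hdec : X * Xᵀ = U * diagonal d * Uᵀ)
    (S : Matrix (Fin N) (Fin N) ℝ)
    (hSdef : S = diagonal (fun i => (Real.sqrt (d i))⁻¹) * Uᵀ * (X + Xᵀ) * U *
      diagonal (fun i => (Real.sqrt (d i))⁻¹))
    (hS : S.IsHermitian)
    (μ : ℝ) (hμ0 : 0 < μ) (hμ : μ < ⨅ i, hS.eigenvalues i) :
    ‖Matrix.toEuclideanCLM (𝕜 := ℝ) (n := Fin N) (1 - μ • X)‖ < 1 := by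
  classical
  have : Nonempty (Fin N) := ⟨⟨0, hN⟩⟩
  set M : Matrix (Fin N) (Fin N) ℝ := 1 - μ • X with hM
  set Dh : Matrix (Fin N) (Fin N) ℝ := diagonal (fun i => Real.sqrt (d i)) with hDh
  set Di : Matrix (Fin N) (Fin N) ℝ := diagonal (fun i => (Real.sqrt (d i))⁻¹) with hDi
  have hsq : ∀ i, Real.sqrt (d i) ≠ 0 := fun i => (Real.sqrt_pos.mpr (hd i)).ne'
  have hDhDi : Dh * Di = 1 := by
    rw [hDh, hDi, diagonal_mul_diagonal, ← diagonal_one]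
    exact congrArg diagonal (funext fun i => mul_inv_cancel₀ (hsq i))
  have hDiDh : Di * Dh = 1 := by
    rw [hDh, hDi, diagonal_mul_diagonal, ← diagonal_one]
    exact congrArg diagonal (funext fun i => inv_mul_cancel₀ (hsq i))
  have hDhDh : Dh * Dh = diagonal d := by
    rw [hDh, diagonal_mul_diagonal]
    exact congrArg diagonal (funext fun i => Real.mul_self_sqrt (hd i).le)
  set W : Matrix (Fin N) (Fin N) ℝ := U * Dh with hW
  have hUdet : IsUnit U.det := by
    have := congrArg det hU.1
    rw [det_mul, det_one] at this
    exact IsUnit.of_mul_eq_one _ this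
  have hDhdet : IsUnit Dh.det := by
    rw [hDh, det_diagonal]
    exact (Finset.prod_ne_zero_iff.mpr fun i _ => hsq i).isUnit
  have hWdet : IsUnit W.det := by
    rw [hW, det_mul]
    exact hUdet.mul hDhdet
  have hμlt : ∀ i, μ < hS.eigenvalues i := fun i =>
    lt_of_lt_of_le hμ (ciInf_le (Set.finite_range _).bddBelow i)
  have hSd : (S - μ • 1).PosDef := myShift hS hμlt
  have hWH : Wᴴ = Dh * Uᵀ := by
    rw [hW, conjTranspose_mul, conjTranspose_eq_transpose_of_trivial,
      conjTranspose_eq_transpose_of_trivial, hDh, diagonal_transpose]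
  have e1 : W * S * Wᴴ = X + Xᵀ := by
    rw [hWH, hSdef, hW]
    simp only [Matrix.mul_assoc]
    rw [← Matrix.mul_assoc Dh Di, hDhDi, Matrix.one_mul,
      ← Matrix.mul_assoc Di Dh, hDiDh, Matrix.one_mul,
      hU.1, Matrix.mul_one, ← Matrix.mul_assoc U Uᵀ, hU.1, Matrix.one_mul]
  have e2 : W * (μ • 1) * Wᴴ = μ • (X * Xᵀ) := by
    rw [hWH, hW, Matrix.mul_smul, Matrix.smul_mul, Matrix.mul_one]
    rw [hdec, ← hDhDh]
    rw [Matrix.mul_assoc, ← Matrix.mul_assoc Dh Dh Uᵀ, ← Matrix.mul_assoc U (Dh * Dh) Uᵀ]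
  have hQ : ((X + Xᵀ) - μ • (X * Xᵀ)).PosDef := by
    have h := myPosDef_conj hSd hWdet
    rwa [Matrix.mul_sub, Matrix.sub_mul, e1, e2] at h
  have hone : (1 : Matrix (Fin N) (Fin N) ℝ) - M * Mᴴ = μ • ((X + Xᵀ) - μ • (X * Xᵀ)) := by
    rw [hM]
    rw [conjTranspose_eq_transpose_of_trivial, transpose_sub, transpose_one, transpose_smul]
    simp only [Matrix.mul_sub, Matrix.sub_mul, Matrix.mul_one, Matrix.one_mul,
      Matrix.smul_mul, Matrix.mul_smul, smul_smul, smul_sub, smul_add]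
    abel
  have honePD : ((1 : Matrix (Fin N) (Fin N) ℝ) - M * Mᴴ).PosDef := by
    rw [hone]; exact myPosDef_smul hQ hμ0
  set T := Matrix.toEuclideanCLM (𝕜 := ℝ) (n := Fin N) Mᴴ with hT
  have hlt : ∀ x : EuclideanSpace ℝ (Fin N), x ≠ 0 → ‖T x‖ < ‖x‖ := by
    intro x hx
    set v : Fin N → ℝ := (WithLp.equiv 2 (Fin N → ℝ)) x with hv
    have hv0 : v ≠ 0 := by simpa [hv] using hx
    have hpos := honePD.dotProduct_mulVec_pos hv0
    rw [Matrix.sub_mulVec, dotProduct_sub, Matrix.one_mulVec, star_trivial, sub_pos] at hpos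
    have hAB : v ⬝ᵥ (M * Mᴴ) *ᵥ v = (Mᴴ *ᵥ v) ⬝ᵥ (Mᴴ *ᵥ v) := by
      rw [← Matrix.mulVec_mulVec, dotProduct_mulVec]
      congr 1
      rw [conjTranspose_eq_transpose_of_trivial, Matrix.mulVec_transpose]
    have hTx : (WithLp.equiv 2 (Fin N → ℝ)) (T x) = Mᴴ *ᵥ v := by
      rw [hT, hv]
      exact Matrix.ofLp_toEuclideanCLM _ _
    have key : ‖T x‖ ^ 2 < ‖x‖ ^ 2 := by
      rw [← real_inner_self_eq_norm_sq, ← real_inner_self_eq_norm_sq]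
      have e3 : ∀ y : EuclideanSpace ℝ (Fin N),
          (inner ℝ y y : ℝ) = ((WithLp.equiv 2 (Fin N → ℝ)) y) ⬝ᵥ ((WithLp.equiv 2 (Fin N → ℝ)) y) := by
        intro y
        simp only [PiLp.inner_apply, RCLike.inner_apply, conj_trivial, dotProduct,
          WithLp.equiv, Equiv.refl_apply]
        rfl
      rw [e3, e3, hTx, ← hv, ← hAB]
      exact hpos
    exact lt_of_pow_lt_pow_left₀ 2 (norm_nonneg x) key
  obtain ⟨x₀, hx₀mem, hmax'⟩ := (isCompact_sphere (0 : EuclideanSpace ℝ (Fin N)) 1).exists_isMaxOn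
    (NormedSpace.sphere_nonempty.mpr zero_le_one)
    (continuous_norm.comp T.continuous).continuousOn
  have hmax : ∀ y ∈ Metric.sphere (0 : EuclideanSpace ℝ (Fin N)) 1,
      ‖T y‖ ≤ ‖T x₀‖ := fun y hy => hmax' hy
  have hx₀ : ‖x₀‖ = 1 := by simpa using hx₀mem
  have hc : ‖T x₀‖ < 1 := by
    have := hlt x₀ (fun h => by rw [h, norm_zero] at hx₀; norm_num at hx₀)
    rwa [hx₀] at this
  have hb : ‖T‖ ≤ ‖T x₀‖ := by
    apply T.opNorm_le_bound (norm_nonneg _)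
    intro x
    rcases eq_or_ne x 0 with rfl | hx
    · simp
    · have hxn : ‖x‖ ≠ 0 := norm_ne_zero_iff.mpr hx
      have hmem : (‖x‖⁻¹ • x) ∈ Metric.sphere (0 : EuclideanSpace ℝ (Fin N)) 1 := by
        simp [norm_smul, abs_of_nonneg, inv_mul_cancel₀ hxn]
      have hle := hmax _ hmem
      simp only [Function.comp_apply, _root_.map_smul, norm_smul, norm_inv, norm_norm] at hle
      calc ‖T x‖ = ‖x‖ * (‖x‖⁻¹ * ‖T x‖) := by field_simp
        _ ≤ ‖x‖ * ‖T x₀‖ := mul_le_mul_of_nonneg_left hle (norm_nonneg x)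
        _ = ‖T x₀‖ * ‖x‖ := mul_comm _ _
  have hnorm : ‖T‖ = ‖Matrix.toEuclideanCLM (𝕜 := ℝ) (n := Fin N) M‖ := by
    rw [hT, ← Matrix.star_eq_conjTranspose, map_star,
      ContinuousLinearMap.star_eq_adjoint]
    exact (LinearIsometryEquiv.norm_map ContinuousLinearMap.adjoint _)
  rw [← hnorm]
  exact lt_of_le_of_lt hb hc
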